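/- Let d ≥ 3 be a natural number and let ε, ε₀ be real numbers with 0 < 2ε < ε₀. Let r : [0,ε₀] → ℝ be a continuous monotone nondecreasing function with r(t) ≥ ε for all t ∈ [0,ε₀] and r(t) = t for all t ∈ [2ε, ε₀]. Then every continuously differentiable function u : [0,ε₀] → ℂ with u(ε₀) = 0 satisfies ∫_0^{2ε} |u(s)|² r(s)^{d−1} ds ≤ 2·(2^d + 2)·ε² · ∫_0^{ε₀} |u'(t)|² r(t)^{d−1} dt. -/

import Mathlib

open Set MeasureTheory intervalIntegral

-- Cauchy–Schwarz for interval integrals of continuous functions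
lemma my_cs {a b : ℝ} (hab : a ≤ b) {f g : ℝ → ℝ}
    (hf : ContinuousOn f (Set.Icc a b)) (hg : ContinuousOn g (Set.Icc a b)) :
    (∫ t in a..b, f t * g t) ^ 2 ≤ (∫ t in a..b, f t ^ 2) * (∫ t in a..b, g t ^ 2) := by
  have hic : Set.uIcc a b = Set.Icc a b := Set.uIcc_of_le hab
  have hif : IntervalIntegrable (fun t => f t ^ 2) volume a b :=
    ((hf.pow 2).mono hic.subset).intervalIntegrable
  have hig : IntervalIntegrable (fun t => g t ^ 2) volume a b :=
    ((hg.pow 2).mono hic.subset).intervalIntegrable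
  have hifg : IntervalIntegrable (fun t => f t * g t) volume a b :=
    ((hf.mul hg).mono hic.subset).intervalIntegrable
  set A := ∫ t in a..b, f t ^ 2 with hA
  set B := ∫ t in a..b, f t * g t with hB
  set C := ∫ t in a..b, g t ^ 2 with hC
  have key : ∀ x : ℝ, 0 ≤ A * (x * x) + (-2 * B) * x + C := by
    intro x
    have h1 : IntervalIntegrable (fun t => x ^ 2 * f t ^ 2) volume a b := hif.const_mul _
    have h2 : IntervalIntegrable (fun t => 2 * x * (f t * g t)) volume a b := hifg.const_mul _
    have e1 : ∫ t in a..b, (x * f t - g t) ^ 2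
        = ∫ t in a..b, (x ^ 2 * f t ^ 2 - 2 * x * (f t * g t) + g t ^ 2) :=
      intervalIntegral.integral_congr (fun t _ => by ring)
    have e2 : ∫ t in a..b, (x ^ 2 * f t ^ 2 - 2 * x * (f t * g t) + g t ^ 2)
        = x ^ 2 * A - 2 * x * B + C := by
      rw [intervalIntegral.integral_add (h1.sub h2) hig,
        intervalIntegral.integral_sub h1 h2,
        intervalIntegral.integral_const_mul, intervalIntegral.integral_const_mul]
    have e3 : 0 ≤ ∫ t in a..b, (x * f t - g t) ^ 2 :=
      intervalIntegral.integral_nonneg hab (fun t _ => sq_nonneg _)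
    nlinarith [e3, e1, e2]
  have := discrim_le_zero key
  rw [discrim] at this
  nlinarith [this]

theorem non_concentration_cylindrical_end
    (d : ℕ) (hd : 3 ≤ d) (ε ε₀ : ℝ) (hε : 0 < ε) (hεε₀ : 2 * ε < ε₀)
    (r : ℝ → ℝ) (hr : ContinuousOn r (Set.Icc 0 ε₀))
    (hmono : MonotoneOn r (Set.Icc 0 ε₀))
    (hrε : ∀ t ∈ Set.Icc 0 ε₀, ε ≤ r t)
    (hrt : ∀ t ∈ Set.Icc (2 * ε) ε₀, r t = t)
    (u u' : ℝ → ℂ)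
    (hu : ∀ t ∈ Set.Icc 0 ε₀, HasDerivWithinAt u (u' t) (Set.Icc 0 ε₀) t)
    (hu' : ContinuousOn u' (Set.Icc 0 ε₀))
    (hub : u ε₀ = 0) :
    ∫ s in (0 : ℝ)..(2 * ε), ‖u s‖ ^ 2 * r s ^ (d - 1) ≤
      2 * (2 ^ d + 2) * ε ^ 2 *
        ∫ t in (0 : ℝ)..ε₀, ‖u' t‖ ^ 2 * r t ^ (d - 1) := by
  set k := d - 1 with hk_def
  have hk : 2 ≤ k := by omega
  have hdk : d = k + 1 := by omega
  have hε₀ : (0:ℝ) < ε₀ := by linarith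
  have h2ε : (0:ℝ) < 2 * ε := by linarith
  have h2εε₀ : 2 * ε ≤ ε₀ := le_of_lt hεε₀
  set w : ℝ → ℝ := fun t => r t ^ k with hw_def
  have hwpos : ∀ t ∈ Set.Icc (0:ℝ) ε₀, 0 < w t :=
    fun t ht => pow_pos (lt_of_lt_of_le hε (hrε t ht)) k
  have hwcont : ContinuousOn w (Set.Icc 0 ε₀) := hr.pow k
  have hwinvcont : ContinuousOn (fun t => (w t)⁻¹) (Set.Icc 0 ε₀) :=
    hwcont.inv₀ (fun t ht => (hwpos t ht).ne')
  have hu'n : ContinuousOn (fun t => ‖u' t‖) (Set.Icc 0 ε₀) := hu'.norm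
  have hgw : ContinuousOn (fun t => ‖u' t‖ ^ 2 * w t) (Set.Icc 0 ε₀) :=
    (hu'n.pow 2).mul hwcont
  set I := ∫ t in (0:ℝ)..ε₀, ‖u' t‖ ^ 2 * w t with hI
  have hInonneg : 0 ≤ I :=
    intervalIntegral.integral_nonneg hε₀.le
      (fun t ht => mul_nonneg (sq_nonneg _) (hwpos t ht).le)
  have hIint : IntervalIntegrable (fun t => ‖u' t‖ ^ 2 * w t) volume 0 ε₀ :=
    (hgw.mono (Set.uIcc_of_le hε₀.le).subset).intervalIntegrable
  set W₀ : ℝ := 2 * ε / ε ^ k + 2 * ε / (2 * ε) ^ k with hW₀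
  -- Step A : ∫₀^{ε₀} w⁻¹ ≤ W₀
  have hWinvInt : ∀ a b : ℝ, 0 ≤ a → a ≤ b → b ≤ ε₀ →
      IntervalIntegrable (fun t => (w t)⁻¹) volume a b := by
    intro a b ha hab hb
    have : Set.uIcc a b ⊆ Set.Icc 0 ε₀ := by
      rw [Set.uIcc_of_le hab]; exact Set.Icc_subset_Icc ha hb
    exact (hwinvcont.mono this).intervalIntegrable
  have hA : ∫ t in (0:ℝ)..ε₀, (w t)⁻¹ ≤ W₀ := by
    rw [← intervalIntegral.integral_add_adjacent_intervals
      (hWinvInt 0 (2*ε) le_rfl h2ε.le h2εε₀) (hWinvInt (2*ε) ε₀ h2ε.le h2εε₀ le_rfl)]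
    have hA1 : ∫ t in (0:ℝ)..(2*ε), (w t)⁻¹ ≤ 2 * ε / ε ^ k := by
      have hb : ∫ t in (0:ℝ)..(2*ε), (w t)⁻¹ ≤ ∫ t in (0:ℝ)..(2*ε), (ε ^ k)⁻¹ := by
        apply intervalIntegral.integral_mono_on h2ε.le
          (hWinvInt 0 (2*ε) le_rfl h2ε.le h2εε₀) intervalIntegrable_const
        intro t ht
        have ht' : t ∈ Set.Icc (0:ℝ) ε₀ := ⟨ht.1, le_trans ht.2 h2εε₀⟩
        exact inv_anti₀ (pow_pos hε k)
          (pow_le_pow_left₀ hε.le (hrε t ht') k)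
      rw [intervalIntegral.integral_const] at hb
      simp only [smul_eq_mul, sub_zero] at hb
      rw [div_eq_mul_inv]; linarith
    have hA2 : ∫ t in (2*ε:ℝ)..ε₀, (w t)⁻¹ ≤ 2 * ε / (2 * ε) ^ k := by
      have he : ∫ t in (2*ε:ℝ)..ε₀, (w t)⁻¹ = ∫ t in (2*ε:ℝ)..ε₀, t ^ (-(k:ℤ)) := by
        apply intervalIntegral.integral_congr
        intro t ht
        rw [Set.uIcc_of_le h2εε₀] at ht
        rw [hw_def]
        simp only []
        rw [hrt t ht, zpow_neg, zpow_natCast]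
      rw [he, integral_zpow]
      · have hP : (2*ε:ℝ) ^ (-(k:ℤ) + 1) = 2 * ε / (2*ε) ^ k := by
          have : (-(k:ℤ) + 1) = 1 - (k:ℤ) := by ring
          rw [this, zpow_sub₀ h2ε.ne', zpow_one, zpow_natCast]
        have hQ : (0:ℝ) ≤ ε₀ ^ (-(k:ℤ) + 1) := zpow_nonneg hε₀.le _
        have hkR : (2:ℝ) ≤ (k:ℝ) := by exact_mod_cast hk
        have hden : ((-(k:ℤ):ℤ):ℝ) + 1 = 1 - (k:ℝ) := by push_cast; ring
        rw [hden, ← hP]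
        have hPnn : (0:ℝ) ≤ (2*ε:ℝ) ^ (-(k:ℤ) + 1) := zpow_nonneg h2ε.le _
        rw [div_le_iff_of_neg (by linarith : (1:ℝ) - (k:ℝ) < 0)]
        nlinarith
      · exact Or.inr ⟨by omega, by
          rw [Set.uIcc_of_le h2εε₀]
          rintro ⟨h0, -⟩; linarith⟩
    linarith
  -- Step B : pointwise bound
  have hB : ∀ s ∈ Set.Icc (0:ℝ) (2*ε), ‖u s‖ ^ 2 ≤ W₀ * I := by
    intro s hs
    have hs0 : (0:ℝ) ≤ s := hs.1
    have hsε₀ : s ≤ ε₀ := le_trans hs.2 h2εε₀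
    have hsub : Set.Icc s ε₀ ⊆ Set.Icc 0 ε₀ := Set.Icc_subset_Icc hs0 le_rfl
    have huicc : Set.uIcc s ε₀ = Set.Icc s ε₀ := Set.uIcc_of_le hsε₀
    have hu'int : IntervalIntegrable u' volume s ε₀ :=
      ((hu'.mono hsub).mono huicc.subset).intervalIntegrable
    have hucont : ContinuousOn u (Set.Icc 0 ε₀) :=
      fun t ht => (hu t ht).continuousWithinAt
    -- FTC
    have hftc : ∫ t in s..ε₀, u' t = u ε₀ - u s := by
      apply intervalIntegral.integral_eq_sub_of_hasDeriv_right_of_le hsε₀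
        (hucont.mono hsub) _ hu'int
      intro x hx
      have hx' : x ∈ Set.Icc (0:ℝ) ε₀ := ⟨le_of_lt (lt_of_le_of_lt hs0 hx.1), hx.2.le⟩
      have hnhds : Set.Icc (0:ℝ) ε₀ ∈ nhds x :=
        Icc_mem_nhds (lt_of_le_of_lt hs0 hx.1) hx.2
      exact ((hu x hx').hasDerivAt hnhds).hasDerivWithinAt
    have hnorm : ‖u s‖ ≤ ∫ t in s..ε₀, ‖u' t‖ := by
      have : ‖u s‖ = ‖∫ t in s..ε₀, u' t‖ := by rw [hftc, hub, zero_sub, norm_neg]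
      rw [this]
      exact intervalIntegral.norm_integral_le_integral_norm hsε₀
    -- Cauchy–Schwarz with weight
    set f : ℝ → ℝ := fun t => ‖u' t‖ * Real.sqrt (w t) with hf_def
    set g : ℝ → ℝ := fun t => (Real.sqrt (w t))⁻¹ with hg_def
    have hsqrtpos : ∀ t ∈ Set.Icc s ε₀, 0 < Real.sqrt (w t) :=
      fun t ht => Real.sqrt_pos.mpr (hwpos t (hsub ht))
    have hfc : ContinuousOn f (Set.Icc s ε₀) :=
      (hu'n.mono hsub).mul ((hwcont.mono hsub).sqrt)
    have hgc : ContinuousOn g (Set.Icc s ε₀) :=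
      ((hwcont.mono hsub).sqrt).inv₀ (fun t ht => (hsqrtpos t ht).ne')
    have hcs := my_cs hsε₀ hfc hgc
    have e1 : ∫ t in s..ε₀, f t * g t = ∫ t in s..ε₀, ‖u' t‖ := by
      apply intervalIntegral.integral_congr
      intro t ht
      rw [huicc] at ht
      simp only [hf_def, hg_def]
      rw [mul_assoc, mul_inv_cancel₀ (hsqrtpos t ht).ne', mul_one]
    have e2 : ∫ t in s..ε₀, f t ^ 2 = ∫ t in s..ε₀, ‖u' t‖ ^ 2 * w t := by
      apply intervalIntegral.integral_congr
      intro t ht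
      rw [huicc] at ht
      simp only [hf_def]
      rw [mul_pow, Real.sq_sqrt (hwpos t (hsub ht)).le]
    have e3 : ∫ t in s..ε₀, g t ^ 2 = ∫ t in s..ε₀, (w t)⁻¹ := by
      apply intervalIntegral.integral_congr
      intro t ht
      rw [huicc] at ht
      simp only [hg_def]
      rw [← Real.sqrt_inv, Real.sq_sqrt (inv_nonneg.mpr (hwpos t (hsub ht)).le)]
    rw [e1, e2, e3] at hcs
    -- bound the two factors
    have hb1 : ∫ t in s..ε₀, ‖u' t‖ ^ 2 * w t ≤ I := by
      apply intervalIntegral.integral_mono_interval hs0 hsε₀ le_rfl _ hIint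
      filter_upwards [ae_restrict_mem measurableSet_Ioc] with t ht
      exact mul_nonneg (sq_nonneg _) (hwpos t ⟨ht.1.le, ht.2⟩).le
    have hb2 : ∫ t in s..ε₀, (w t)⁻¹ ≤ W₀ := by
      refine le_trans ?_ hA
      apply intervalIntegral.integral_mono_interval hs0 hsε₀ le_rfl _
        (hWinvInt 0 ε₀ le_rfl hε₀.le le_rfl)
      filter_upwards [ae_restrict_mem measurableSet_Ioc] with t ht
      exact (inv_nonneg).mpr (hwpos t ⟨ht.1.le, ht.2⟩).le
    have hintnn : 0 ≤ ∫ t in s..ε₀, ‖u' t‖ := by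
      exact intervalIntegral.integral_nonneg hsε₀ (fun t _ => norm_nonneg _)
    have hfactnn : 0 ≤ ∫ t in s..ε₀, (w t)⁻¹ := by
      exact intervalIntegral.integral_nonneg hsε₀
        (fun t ht => (inv_nonneg).mpr (hwpos t (hsub ht)).le)
    have hfact2nn : 0 ≤ ∫ t in s..ε₀, ‖u' t‖ ^ 2 * w t := by
      exact intervalIntegral.integral_nonneg hsε₀
        (fun t ht => mul_nonneg (sq_nonneg _) (hwpos t (hsub ht)).le)
    calc ‖u s‖ ^ 2 ≤ (∫ t in s..ε₀, ‖u' t‖) ^ 2 := by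
          apply pow_le_pow_left₀ (norm_nonneg _) hnorm
      _ ≤ (∫ t in s..ε₀, ‖u' t‖ ^ 2 * w t) * (∫ t in s..ε₀, (w t)⁻¹) := hcs
      _ ≤ I * W₀ := mul_le_mul hb1 hb2 hfactnn hInonneg
      _ = W₀ * I := mul_comm _ _
  -- Step C : integrate the pointwise bound
  have hwle : ∀ s ∈ Set.Icc (0:ℝ) (2*ε), w s ≤ (2*ε) ^ k := by
    intro s hs
    have hs' : s ∈ Set.Icc (0:ℝ) ε₀ := ⟨hs.1, le_trans hs.2 h2εε₀⟩
    have h2ε' : (2*ε) ∈ Set.Icc (0:ℝ) ε₀ := ⟨h2ε.le, h2εε₀⟩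
    have : r s ≤ r (2*ε) := hmono hs' h2ε' hs.2
    have hr2ε : r (2*ε) = 2*ε := hrt (2*ε) ⟨le_rfl, h2εε₀⟩
    exact pow_le_pow_left₀ (le_trans hε.le (hrε s hs')) (by linarith) k
  have hC : ∫ s in (0:ℝ)..(2*ε), ‖u s‖ ^ 2 * w s ≤ 2 * ε * (W₀ * I * (2*ε) ^ k) := by
    have hucont : ContinuousOn u (Set.Icc 0 ε₀) :=
      fun t ht => (hu t ht).continuousWithinAt
    have hsub : Set.Icc (0:ℝ) (2*ε) ⊆ Set.Icc 0 ε₀ := Set.Icc_subset_Icc le_rfl h2εε₀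
    have hLint : IntervalIntegrable (fun s => ‖u s‖ ^ 2 * w s) volume 0 (2*ε) := by
      have : ContinuousOn (fun s => ‖u s‖ ^ 2 * w s) (Set.Icc 0 (2*ε)) :=
        ((hucont.norm.mono hsub).pow 2).mul (hwcont.mono hsub)
      exact (this.mono (Set.uIcc_of_le h2ε.le).subset).intervalIntegrable
    have hmono' : ∫ s in (0:ℝ)..(2*ε), ‖u s‖ ^ 2 * w s
        ≤ ∫ s in (0:ℝ)..(2*ε), W₀ * I * (2*ε) ^ k := by
      apply intervalIntegral.integral_mono_on h2ε.le hLint intervalIntegrable_const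
      intro s hs
      have h1 := hB s hs
      have h2 := hwle s hs
      have hwnn : 0 ≤ w s := (hwpos s (hsub hs)).le
      have hWInn : 0 ≤ W₀ * I := le_trans (sq_nonneg _) h1
      nlinarith [sq_nonneg (‖u s‖)]
    rw [intervalIntegral.integral_const] at hmono'
    simp only [smul_eq_mul, sub_zero] at hmono'
    linarith
  -- conclude
  have hfinal : 2 * ε * (W₀ * I * (2*ε) ^ k) = 2 * (2 ^ d + 2) * ε ^ 2 * I := by
    have hεk : (ε:ℝ) ^ k ≠ 0 := pow_ne_zero k hε.ne'
    have h2εk : ((2*ε):ℝ) ^ k ≠ 0 := pow_ne_zero k h2ε.ne'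
    rw [hW₀, hdk]
    field_simp
    ring_nf
  calc ∫ s in (0:ℝ)..(2*ε), ‖u s‖ ^ 2 * r s ^ k
      = ∫ s in (0:ℝ)..(2*ε), ‖u s‖ ^ 2 * w s := rfl
    _ ≤ 2 * ε * (W₀ * I * (2*ε) ^ k) := hC
    _ = 2 * (2 ^ d + 2) * ε ^ 2 * I := hfinal
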